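/- Let H be a hypergraph and let h₁, h₂ be acyclic orientations of H. Then the flip distance dist(h₁, h₂) is finite and satisfies dist(h₁, h₂) ≤ |{e ∈ 𝓔 : h₁(e) ≠ h₂(e)}|; that is, there exists a sequence of at most |{e ∈ 𝓔 : h₁(e) ≠ h₂(e)}| flips transforming h₁ into h₂. -/

import Mathlib

/-!
A hypergraph on vertex type `V` is given by a finite collection `𝓔` of nonempty
hyperedges (finsets of `V`).  An orientation assigns to each hyperedge a head
belonging to it.  `Arc 𝓔 h u v` is the arc relation of the digraph `D_h`, and an
orientation is acyclic if `D_h` has no directed cycle.  `flip 𝓔 h u v` is the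
orientation `h^{(u,v)}`, and `(u, v)` is flippable in `h` if `h^{(u,v)}` is acyclic.
-/

namespace PaperFlip

variable {V : Type*} [DecidableEq V]

/-- The hyperedges of a hypergraph, viewed as a subtype. -/
abbrev Edge (𝓔 : Finset (Finset V)) := {e : Finset V // e ∈ 𝓔}

/-- `h` is an orientation: the head of every hyperedge belongs to it. -/
def IsOrientation (𝓔 : Finset (Finset V)) (h : Edge 𝓔 → V) : Prop :=
  ∀ e : Edge 𝓔, h e ∈ e.1

/-- The arc relation of the digraph `D_h`: there is an arc from `u` to `v` iff some
hyperedge `e` has head `v` and contains `u` as a different vertex. -/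
def Arc (𝓔 : Finset (Finset V)) (h : Edge 𝓔 → V) (u v : V) : Prop :=
  ∃ e : Edge 𝓔, h e = v ∧ u ∈ e.1 ∧ u ≠ v

/-- An acyclic orientation: an orientation whose digraph `D_h` has no directed cycle. -/
def IsAcyclic (𝓔 : Finset (Finset V)) (h : Edge 𝓔 → V) : Prop :=
  IsOrientation 𝓔 h ∧ ∀ v : V, ¬ Relation.TransGen (Arc 𝓔 h) v v

/-- The orientation `h^{(u,v)}`: every hyperedge containing both `u` and `v` whose
head is `u` gets the new head `v`; all other heads are unchanged. -/
def flip (𝓔 : Finset (Finset V)) (h : Edge 𝓔 → V) (u v : V) : Edge 𝓔 → V :=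
  fun e => if u ∈ e.1 ∧ v ∈ e.1 ∧ h e = u then v else h e

/-- The ordered pair `(u, v)` of distinct vertices is flippable in `h` if `h^{(u,v)}`
is acyclic. -/
def Flippable (𝓔 : Finset (Finset V)) (h : Edge 𝓔 → V) (u v : V) : Prop :=
  u ≠ v ∧ IsAcyclic 𝓔 (flip 𝓔 h u v)

/-- `g₂` is obtained from `g₁` by a flip: `g₂ = g₁^{(u,v)} ≠ g₁` for some flippable
pair `(u, v)`. -/
def FlipStep (𝓔 : Finset (Finset V)) (g₁ g₂ : Edge 𝓔 → V) : Prop :=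
  ∃ u v : V, Flippable 𝓔 g₁ u v ∧ g₂ = flip 𝓔 g₁ u v ∧ g₂ ≠ g₁

/-- There is a sequence of `ℓ` flips transforming `h₁` into `h₂` (through acyclic
orientations). -/
def FlipSeq (𝓔 : Finset (Finset V)) (h₁ h₂ : Edge 𝓔 → V) (ℓ : ℕ) : Prop :=
  ∃ g : ℕ → Edge 𝓔 → V, g 0 = h₁ ∧ g ℓ = h₂ ∧ ∀ i < ℓ, FlipStep 𝓔 (g i) (g (i + 1))

/-- A finite nonempty set with a transitive irreflexive relation has a minimal element. -/
lemma exists_min_rel {α : Type*} (r : α → α → Prop)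
    (htrans : ∀ a b c, r a b → r b c → r a c) (hirr : ∀ a, ¬ r a a)
    (s : Finset α) : s.Nonempty → ∃ a ∈ s, ∀ b ∈ s, ¬ r b a := by
  classical
  induction s using Finset.strongInduction with
  | _ s ih =>
    intro hs
    obtain ⟨a, ha⟩ := hs
    by_cases h : ∃ b ∈ s, r b a
    · obtain ⟨b, hb, hba⟩ := h
      have hss : s.filter (fun x => r x a) ⊂ s := by
        refine ⟨Finset.filter_subset _ _, fun hsub => ?_⟩
        have := Finset.mem_filter.mp (hsub ha)
        exact hirr a this.2
      obtain ⟨m, hm, hmin⟩ := ih _ hss ⟨b, Finset.mem_filter.mpr ⟨hb, hba⟩⟩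
      refine ⟨m, Finset.filter_subset _ _ hm, fun c hc hcm => ?_⟩
      have hma : r m a := (Finset.mem_filter.mp hm).2
      exact hmin c (Finset.mem_filter.mpr ⟨hc, htrans _ _ _ hcm hma⟩) hcm
    · exact ⟨a, ha, fun b hb hba => h ⟨b, hb, hba⟩⟩

/-- If there is no path from `v` to `u` other than the direct arc, then flipping
`(u,v)` preserves acyclicity. -/
lemma flip_acyclic {V : Type*} [DecidableEq V] (𝓔 : Finset (Finset V))
    (h₁ : Edge 𝓔 → V) (hh₁ : IsAcyclic 𝓔 h₁) (u v : V) (huv : u ≠ v)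
    (hbad : ¬ ∃ w, Arc 𝓔 h₁ v w ∧ w ≠ u ∧ Relation.ReflTransGen (Arc 𝓔 h₁) w u) :
    IsAcyclic 𝓔 (flip 𝓔 h₁ u v) := by
  set A' : V → V → Prop := fun a b => Arc 𝓔 h₁ a b ∧ (a = v → b ≠ u) with hA'
  set R : V → V → Prop := fun a b =>
    a ≠ b ∧ (A' a b ∨ (b = v ∧ Relation.ReflTransGen A' a u)) with hR
  have hA'sub : ∀ a b, A' a b → Arc 𝓔 h₁ a b := fun a b h => h.1
  have hA'R : ∀ a b, A' a b → R a b := by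
    rintro a b ⟨⟨g, hg, hag, hab⟩, hp⟩
    exact ⟨hab, Or.inl ⟨⟨g, hg, hag, hab⟩, hp⟩⟩
  constructor
  · intro g
    unfold flip
    split
    · next hc => exact hc.2.1
    · exact hh₁.1 g
  intro z hz
  -- Step 1: arcs of the flipped digraph are contained in R
  have harc : ∀ a b, Arc 𝓔 (flip 𝓔 h₁ u v) a b → R a b := by
    rintro a b ⟨g, hg, hag, hab⟩
    unfold flip at hg
    by_cases hc : u ∈ g.1 ∧ v ∈ g.1 ∧ h₁ g = u
    · rw [if_pos hc] at hg
      refine ⟨hab, Or.inr ⟨hg.symm, ?_⟩⟩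
      by_cases hau : a = u
      · exact hau ▸ Relation.ReflTransGen.refl
      · refine Relation.ReflTransGen.single ⟨⟨g, hc.2.2, hag, hau⟩, fun hav => ?_⟩
        exact absurd (hav.trans hg) hab
    · rw [if_neg hc] at hg
      refine ⟨hab, Or.inl ⟨⟨g, hg, hag, hab⟩, fun hav hbu => ?_⟩⟩
      exact hc ⟨hbu ▸ hg ▸ hh₁.1 g, hav ▸ hag, hbu ▸ hg⟩
  -- Step 2 (W): split an R-path at the last visit of v
  have W : ∀ a b, Relation.ReflTransGen R a b →
      Relation.ReflTransGen A' a b ∨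
        (Relation.ReflTransGen R a v ∧ Relation.ReflTransGen A' v b) := by
    intro a b hab
    induction hab using Relation.ReflTransGen.head_induction_on with
    | refl => exact Or.inl Relation.ReflTransGen.refl
    | head hac hcb ih =>
      rename_i a' c
      rcases ih with hl | ⟨hcv, hvb⟩
      · rcases hac.2 with hA | ⟨rfl, _⟩
        · exact Or.inl (hl.head hA)
        · exact Or.inr ⟨Relation.ReflTransGen.single hac, hl⟩
      · exact Or.inr ⟨hcv.head hac, hvb⟩
  -- Step 3 (L): an R-path ending at v yields an A'-path to v or to u
  have L : ∀ a, Relation.ReflTransGen R a v →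
      Relation.ReflTransGen A' a v ∨ Relation.ReflTransGen A' a u := by
    intro a hav
    induction hav using Relation.ReflTransGen.head_induction_on with
    | refl => exact Or.inl Relation.ReflTransGen.refl
    | head hac hcv ih =>
      rename_i a' c
      rcases hac.2 with hA | ⟨rfl, hau⟩
      · rcases ih with hl | hr
        · exact Or.inl (hl.head hA)
        · exact Or.inr (hr.head hA)
      · exact Or.inr hau
  -- a cycle through v is impossible
  have hvv : ¬ Relation.TransGen R v v := by
    intro hvv
    obtain ⟨c, hvc, hcv⟩ := Relation.TransGen.head'_iff.mp hvv
    rcases hvc.2 with hA | ⟨rfl, _⟩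
    · have hcnu : c ≠ u := hA.2 rfl
      rcases L c hcv with hl | hr
      · exact hh₁.2 v (Relation.TransGen.head' (hA'sub _ _ hA)
          (Relation.ReflTransGen.mono (fun a b h => hA'sub a b h) _ _ hl))
      · exact hbad ⟨c, hA.1, hcnu, Relation.ReflTransGen.mono (fun a b h => hA'sub a b h) _ _ hr⟩
    · exact hvc.1 rfl
  -- conclude
  have hzR : Relation.TransGen R z z := Relation.TransGen.mono harc _ _ hz
  obtain ⟨c, hzc, hcz⟩ := Relation.TransGen.tail'_iff.mp hzR
  rcases W z c hzc with hl | ⟨hzv, hvc⟩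
  · rcases hcz.2 with hA | ⟨hzv2, hcu⟩
    · exact hh₁.2 z (Relation.TransGen.mono (fun a b h => hA'sub a b h) _ _ (Relation.TransGen.tail' hl hA))
    · -- z = v : path v →* c →* u in A'
      rw [hzv2] at hl
      have hvu : Relation.ReflTransGen A' v u := hl.trans hcu
      rcases Relation.ReflTransGen.cases_head hvu with heq | ⟨w, hvw, hwu⟩
      · exact huv heq.symm
      · exact hbad ⟨w, hvw.1, hvw.2 rfl, Relation.ReflTransGen.mono (fun a b h => hA'sub a b h) _ _ hwu⟩
  · -- cycle through v
    exact hvv (Relation.TransGen.trans_right (Relation.ReflTransGen.mono hA'R _ _ hvc)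
      ((Relation.TransGen.single hcz).trans_left hzv))

/-- Key step: if the orientations differ somewhere, there is a flip strictly
decreasing the set of disagreements. -/
lemma exists_good_step {V : Type*} [DecidableEq V] (𝓔 : Finset (Finset V))
    (h₁ h₂ : Edge 𝓔 → V) (hh₁ : IsAcyclic 𝓔 h₁) (hh₂ : IsAcyclic 𝓔 h₂)
    (hne : (Finset.univ.filter fun e : Edge 𝓔 => h₁ e ≠ h₂ e).Nonempty) :
    ∃ h' : Edge 𝓔 → V, FlipStep 𝓔 h₁ h' ∧ IsAcyclic 𝓔 h' ∧
      (Finset.univ.filter fun e : Edge 𝓔 => h' e ≠ h₂ e) ⊂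
        (Finset.univ.filter fun e : Edge 𝓔 => h₁ e ≠ h₂ e) := by
  classical
  set D : Finset (Edge 𝓔) := Finset.univ.filter fun e : Edge 𝓔 => h₁ e ≠ h₂ e with hD
  have r₁trans : ∀ a b c : V, Relation.TransGen (Arc 𝓔 h₁) a b →
      Relation.TransGen (Arc 𝓔 h₁) b c → Relation.TransGen (Arc 𝓔 h₁) a c :=
    fun _ _ _ hab hbc => hab.trans hbc
  -- choose u minimal among h₁-heads of disagreeing edges
  obtain ⟨u, huU, humin⟩ := exists_min_rel (fun a b => Relation.TransGen (Arc 𝓔 h₁) a b)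
    r₁trans (fun a => hh₁.2 a) (D.image h₁) ((hne.image h₁))
  -- choose v minimal (for h₂-reachability from v) among h₂-heads of those with h₁-head u
  have hEu : ((D.filter fun e => h₁ e = u).image h₂).Nonempty := by
    obtain ⟨e₀, he₀, he₀u⟩ := Finset.mem_image.mp huU
    exact ⟨h₂ e₀, Finset.mem_image.mpr ⟨e₀, Finset.mem_filter.mpr ⟨he₀, he₀u⟩, rfl⟩⟩
  obtain ⟨v, hvV, hvmin⟩ := exists_min_rel (fun a b => Relation.TransGen (Arc 𝓔 h₂) b a)
    (fun _ _ _ hab hbc => hbc.trans hab) (fun a => hh₂.2 a) _ hEu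
  obtain ⟨e, heD', hev⟩ := Finset.mem_image.mp hvV
  obtain ⟨heD, heu⟩ := Finset.mem_filter.mp heD'
  have heD2 : h₁ e ≠ h₂ e := (Finset.mem_filter.mp heD).2
  have huv : u ≠ v := by rw [← heu, ← hev]; exact heD2
  have hue : u ∈ e.1 := heu ▸ hh₁.1 e
  have hve : v ∈ e.1 := hev ▸ hh₂.1 e
  have harc_uv₂ : Arc 𝓔 h₂ u v := ⟨e, hev, hue, huv⟩
  -- no disagreeing edge containing v has h₂-head u
  have hnou : ∀ f : Edge 𝓔, v ∈ f.1 → h₂ f ≠ u := by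
    intro f hvf hfu
    exact hh₂.2 u ((Relation.TransGen.single harc_uv₂).tail ⟨f, hfu, hvf, huv.symm⟩)
  -- the pair (u, v) admits no alternative path
  have hbad : ¬ ∃ w, Arc 𝓔 h₁ v w ∧ w ≠ u ∧ Relation.ReflTransGen (Arc 𝓔 h₁) w u := by
    rintro ⟨w, ⟨f, hf, hvf, hvw⟩, hwu, hpath⟩
    by_cases hff : h₂ f = w
    · have harc_vw₂ : Arc 𝓔 h₂ v w := ⟨f, hff, hvf, hvw⟩
      have key : ∀ x, Relation.ReflTransGen (Arc 𝓔 h₁) x u →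
          Relation.ReflTransGen (Arc 𝓔 h₂) w x → False := by
        intro x hx
        induction hx using Relation.ReflTransGen.head_induction_on with
        | refl =>
          intro hw2u
          exact hh₂.2 w (Relation.TransGen.tail' (hw2u.tail harc_uv₂) harc_vw₂)
        | head hxc hcu ih =>
          rename_i x' c
          intro hwx
          obtain ⟨g, hg, hxg, hxc'⟩ := hxc
          by_cases hgg : h₂ g = c
          · exact ih (hwx.tail ⟨g, hgg, hxg, hxc'⟩)
          · have hgD : g ∈ D := Finset.mem_filter.mpr ⟨Finset.mem_univ g, by
              rw [hg]; exact fun hcontra => hgg hcontra.symm⟩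
            by_cases hcu' : c = u
            · -- h₂ g ∈ image; build a strict h₂-path from v to h₂ g
              have hvx : Relation.ReflTransGen (Arc 𝓔 h₂) v x' :=
                hwx.head harc_vw₂
              have hmem : h₂ g ∈ (D.filter fun e' => h₁ e' = u).image h₂ :=
                Finset.mem_image.mpr ⟨g, Finset.mem_filter.mpr ⟨hgD, hcu' ▸ hg⟩, rfl⟩
              refine hvmin (h₂ g) hmem ?_
              by_cases hx2 : x' = h₂ g
              · exact Relation.TransGen.head' harc_vw₂ (hx2 ▸ hwx)
              · exact Relation.TransGen.tail' hvx ⟨g, rfl, hxg, hx2⟩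
            · have hcU : c ∈ D.image h₁ := Finset.mem_image.mpr ⟨g, hgD, hg⟩
              have : Relation.TransGen (Arc 𝓔 h₁) c u := by
                rcases Relation.reflTransGen_iff_eq_or_transGen.mp hcu with heq | ht
                · exact absurd heq.symm hcu'
                · exact ht
              exact humin c hcU this
      exact key w hpath Relation.ReflTransGen.refl
    · have hwU : w ∈ D.image h₁ :=
        Finset.mem_image.mpr ⟨f, Finset.mem_filter.mpr ⟨Finset.mem_univ f,
          by rw [hf]; exact fun hcontra => hff hcontra.symm⟩, hf⟩
      refine humin w hwU ?_
      rcases Relation.reflTransGen_iff_eq_or_transGen.mp hpath with heq | ht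
      · exact absurd heq.symm hwu
      · exact ht
  -- the flip
  set h' : Edge 𝓔 → V := flip 𝓔 h₁ u v with hh'
  have hflip_e : h' e = v := by
    unfold h'
    unfold flip
    rw [if_pos ⟨hue, hve, heu⟩]
  have hacy : IsAcyclic 𝓔 h' := flip_acyclic 𝓔 h₁ hh₁ u v huv hbad
  have hne' : h' ≠ h₁ := by
    intro hcontra
    rw [hcontra, heu] at hflip_e
    exact huv hflip_e
  refine ⟨h', ⟨u, v, ⟨huv, hacy⟩, rfl, hne'⟩, hacy, ?_, ?_⟩
  · -- subset
    intro f hf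
    obtain ⟨-, hf2⟩ := Finset.mem_filter.mp hf
    refine Finset.mem_filter.mpr ⟨Finset.mem_univ f, ?_⟩
    intro heq
    apply hf2
    unfold h'
    unfold flip
    by_cases hc : u ∈ f.1 ∧ v ∈ f.1 ∧ h₁ f = u
    · rw [if_pos hc]
      exact absurd (heq ▸ hc.2.2) (hnou f hc.2.1)
    · rw [if_neg hc]; exact heq
  · -- strictness : e
    intro hsub
    have : e ∈ Finset.univ.filter fun f : Edge 𝓔 => h' f ≠ h₂ f :=
      hsub (Finset.mem_filter.mpr ⟨Finset.mem_univ e, heD2⟩)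
    exact (Finset.mem_filter.mp this).2 (hflip_e.trans hev.symm)

/-- For acyclic orientations `h₁, h₂` of a hypergraph, there is a flip
sequence from `h₁` to `h₂` of length at most `|{e ∈ 𝓔 : h₁(e) ≠ h₂(e)}|`; in particular
the flip distance is finite and at most this number. -/
theorem flipDist_le_card_diff {V : Type*} [DecidableEq V] (𝓔 : Finset (Finset V))
    (hE : ∀ e ∈ 𝓔, e.Nonempty) (h₁ h₂ : Edge 𝓔 → V)
    (hh₁ : IsAcyclic 𝓔 h₁) (hh₂ : IsAcyclic 𝓔 h₂) :
    ∃ ℓ : ℕ, FlipSeq 𝓔 h₁ h₂ ℓ ∧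
      ℓ ≤ (Finset.univ.filter fun e : Edge 𝓔 => h₁ e ≠ h₂ e).card := by
  classical
  suffices H : ∀ n : ℕ, ∀ h₁ : Edge 𝓔 → V, IsAcyclic 𝓔 h₁ →
      (Finset.univ.filter fun e : Edge 𝓔 => h₁ e ≠ h₂ e).card ≤ n →
      ∃ ℓ : ℕ, FlipSeq 𝓔 h₁ h₂ ℓ ∧
        ℓ ≤ (Finset.univ.filter fun e : Edge 𝓔 => h₁ e ≠ h₂ e).card by
    exact H _ h₁ hh₁ le_rfl
  intro n
  induction n with
  | zero =>
    intro h₁ hh₁ hcard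
    have hempty : (Finset.univ.filter fun e : Edge 𝓔 => h₁ e ≠ h₂ e) = ∅ :=
      Finset.card_eq_zero.mp (Nat.le_zero.mp hcard)
    have heq : h₁ = h₂ := by
      funext f
      by_contra hf
      have : f ∈ (Finset.univ.filter fun e : Edge 𝓔 => h₁ e ≠ h₂ e) :=
        Finset.mem_filter.mpr ⟨Finset.mem_univ f, hf⟩
      rw [hempty] at this
      exact absurd this (Finset.notMem_empty f)
    exact ⟨0, ⟨fun _ => h₁, rfl, heq, fun i hi => absurd hi (Nat.not_lt_zero i)⟩,
      Nat.zero_le _⟩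
  | succ n ih =>
    intro h₁ hh₁ hcard
    by_cases hzero : (Finset.univ.filter fun e : Edge 𝓔 => h₁ e ≠ h₂ e) = ∅
    · have heq : h₁ = h₂ := by
        funext f
        by_contra hf
        have : f ∈ (Finset.univ.filter fun e : Edge 𝓔 => h₁ e ≠ h₂ e) :=
          Finset.mem_filter.mpr ⟨Finset.mem_univ f, hf⟩
        rw [hzero] at this
        exact absurd this (Finset.notMem_empty f)
      exact ⟨0, ⟨fun _ => h₁, rfl, heq, fun i hi => absurd hi (Nat.not_lt_zero i)⟩,
        Nat.zero_le _⟩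
    · obtain ⟨h', hstep, hacy, hssub⟩ := exists_good_step 𝓔 h₁ h₂ hh₁ hh₂
        (Finset.nonempty_of_ne_empty hzero)
      have hlt : (Finset.univ.filter fun e : Edge 𝓔 => h' e ≠ h₂ e).card <
          (Finset.univ.filter fun e : Edge 𝓔 => h₁ e ≠ h₂ e).card :=
        Finset.card_lt_card hssub
      obtain ⟨ℓ', ⟨g, hg0, hgl, hgstep⟩, hℓ'⟩ := ih h' hacy (by omega)
      refine ⟨ℓ' + 1, ⟨fun i => match i with | 0 => h₁ | j + 1 => g j, rfl, hgl, ?_⟩,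
        by omega⟩
      intro i hi
      match i with
      | 0 =>
        show FlipStep 𝓔 h₁ (g 0)
        rw [hg0]
        exact hstep
      | j + 1 =>
        exact hgstep j (by omega)

end PaperFlip
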